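/- Let X ⊆ ℝ² be such that any two distinct points of X are at distance at least 2r from each other (r > 0), and let q > 0. Let 𝒯 be a family of triangles with vertices in X, each with circumradius at most q, with pairwise disjoint interiors, and each contained in the closed disk B_α of radius α > 0 centered at the origin. Then 𝒯 has cardinality at most qπα²/(2r³). -/

import Mathlib

open MeasureTheory Metric Set Pointwise ENNReal EuclideanGeometry

noncomputable section
namespace Stmt8Aux

abbrev E := EuclideanSpace ℝ (Fin 2)

def bE : OrthonormalBasis (Fin 2) ℝ E := EuclideanSpace.basisFun (Fin 2) ℝ

def Sset : Set E := {x | 0 ≤ x 0 ∧ 0 ≤ x 1 ∧ x 0 + x 1 ≤ 1}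

lemma isClosed_Sset : IsClosed Sset := by
  have h0 := (EuclideanSpace.proj (𝕜 := ℝ) (0 : Fin 2)).continuous
  have h1 := (EuclideanSpace.proj (𝕜 := ℝ) (1 : Fin 2)).continuous
  exact (isClosed_le continuous_const h0).inter
    ((isClosed_le continuous_const h1).inter (isClosed_le (h0.add h1) continuous_const))

lemma convex_Sset : Convex ℝ Sset := by
  have h0 : IsLinearMap ℝ (fun x : E => x 0) := ⟨fun _ _ => rfl, fun _ _ => rfl⟩
  have h1 : IsLinearMap ℝ (fun x : E => x 1) := ⟨fun _ _ => rfl, fun _ _ => rfl⟩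
  have h2 : IsLinearMap ℝ (fun x : E => x 0 + x 1) :=
    ⟨fun a b => by simp [h0.map_add, h1.map_add]; ring, fun c a => by
      simp [h0.map_smul, h1.map_smul]; ring⟩
  have : Sset = {w : E | 0 ≤ w 0} ∩ {w | 0 ≤ w 1} ∩ {w | w 0 + w 1 ≤ 1} := by
    ext w; simp [Sset]; tauto
  rw [this]
  exact ((convex_halfSpace_ge h0 0).inter (convex_halfSpace_ge h1 0)).inter
    (convex_halfSpace_le h2 1)

lemma repr_eq (x : E) : x = x 0 • bE 0 + x 1 • bE 1 := by
  ext j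
  fin_cases j <;> simp [bE, EuclideanSpace.basisFun_apply, EuclideanSpace.single_apply]

lemma convexHull_eq_Sset : convexHull ℝ {0, bE 0, bE 1} = Sset := by
  apply Subset.antisymm
  · apply convexHull_min _ convex_Sset
    rintro x (rfl | rfl | rfl) <;>
      simp [Sset, bE, EuclideanSpace.basisFun_apply, EuclideanSpace.single_apply]
  · rintro x ⟨hx0, hx1, hxs⟩
    have h0m : (0 : E) ∈ convexHull ℝ ({0, bE 0, bE 1} : Set E) :=
      subset_convexHull ℝ _ (by simp)
    have h1m : bE 0 ∈ convexHull ℝ ({0, bE 0, bE 1} : Set E) :=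
      subset_convexHull ℝ _ (by simp)
    have h2m : bE 1 ∈ convexHull ℝ ({0, bE 0, bE 1} : Set E) :=
      subset_convexHull ℝ _ (by simp)
    have hc : Convex ℝ (convexHull ℝ ({0, bE 0, bE 1} : Set E)) := convex_convexHull ℝ _
    rcases eq_or_lt_of_le (add_nonneg hx0 hx1) with h | h
    · have hx00 : x 0 = 0 := by linarith
      have hx10 : x 1 = 0 := by linarith
      have : x = 0 := by rw [repr_eq x, hx00, hx10]; simp
      rw [this]; exact h0m
    · set s := x 0 + x 1 with hs
      have hy : (x 0 / s) • bE 0 + (x 1 / s) • bE 1 ∈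
          convexHull ℝ ({0, bE 0, bE 1} : Set E) :=
        hc h1m h2m (div_nonneg hx0 h.le) (div_nonneg hx1 h.le) (by field_simp; exact hs.symm)
      have hx : x = s • ((x 0 / s) • bE 0 + (x 1 / s) • bE 1) := by
        rw [smul_add, smul_smul, smul_smul, mul_div_cancel₀ _ h.ne',
          mul_div_cancel₀ _ h.ne']
        exact repr_eq x
      rw [hx]
      have := hc hy h0m (by positivity : (0:ℝ) ≤ s) (by linarith : (0:ℝ) ≤ 1 - s) (by ring)
      simpa using this

def Sset' : Set E := {x | x 0 ≤ 1 ∧ x 1 ≤ 1 ∧ 1 ≤ x 0 + x 1}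

lemma par_eq : parallelepiped (⇑bE) =
    {x : E | (0 ≤ x 0 ∧ x 0 ≤ 1) ∧ 0 ≤ x 1 ∧ x 1 ≤ 1} := by
  ext x
  rw [mem_parallelepiped_iff]
  constructor
  · rintro ⟨t, ⟨ht0, ht1⟩, rfl⟩
    have e : ∀ j, (∑ i, t i • bE i) j = t j := by
      intro j
      fin_cases j <;>
        simp [bE, Fin.sum_univ_two, EuclideanSpace.basisFun_apply,
          EuclideanSpace.single_apply]
    refine ⟨⟨?_, ?_⟩, ?_, ?_⟩ <;> rw [e] <;>
      first
        | exact ht0 _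
        | exact ht1 _
  · rintro ⟨⟨h00, h01⟩, h10, h11⟩
    refine ⟨fun i => x i, ⟨fun i => by fin_cases i <;> assumption,
      fun i => by fin_cases i <;> assumption⟩, ?_⟩
    ext j
    fin_cases j <;>
      simp [bE, Fin.sum_univ_two, EuclideanSpace.basisFun_apply,
        EuclideanSpace.single_apply]

lemma par_eq_union : parallelepiped (⇑bE) = Sset ∪ Sset' := by
  rw [par_eq]
  ext x
  simp only [Sset, Sset', mem_setOf_eq, mem_union]
  constructor
  · rintro ⟨⟨h00, h01⟩, h10, h11⟩
    rcases le_or_gt (x 0 + x 1) 1 with h | h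
    · exact Or.inl ⟨h00, h10, h⟩
    · exact Or.inr ⟨h01, h11, h.le⟩
  · rintro (⟨h0, h1, hs⟩ | ⟨h0, h1, hs⟩)
    · exact ⟨⟨h0, by linarith⟩, h1, by linarith⟩
    · exact ⟨⟨by linarith, h0⟩, by linarith, h1⟩

lemma Sset'_eq : Sset' = (bE 0 + bE 1) +ᵥ (-Sset) := by
  ext x
  rw [Set.mem_vadd_set_iff_neg_vadd_mem, Set.mem_neg]
  have hc : ∀ j : Fin 2, (-(-(bE 0 + bE 1) +ᵥ x)) j = 1 - x j := by
    intro j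
    have : (-(-(bE 0 + bE 1) +ᵥ x)) j = -(-((bE 0) j + (bE 1) j) + x j) := rfl
    rw [this]
    fin_cases j <;>
      simp [bE, EuclideanSpace.basisFun_apply, EuclideanSpace.single_apply] <;> ring
  simp only [Sset, Sset', mem_setOf_eq, hc]
  constructor
  · rintro ⟨h0, h1, hs⟩; exact ⟨by linarith, by linarith, by linarith⟩
  · rintro ⟨h0, h1, hs⟩; exact ⟨by linarith, by linarith, by linarith⟩

lemma isClosed_Sset' : IsClosed Sset' := by
  have h0 := (EuclideanSpace.proj (𝕜 := ℝ) (0 : Fin 2)).continuous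
  have h1 := (EuclideanSpace.proj (𝕜 := ℝ) (1 : Fin 2)).continuous
  exact (isClosed_le h0 continuous_const).inter
    ((isClosed_le h1 continuous_const).inter (isClosed_le continuous_const (h0.add h1)))

def fsum : E →ₗ[ℝ] ℝ where
  toFun x := x 0 + x 1
  map_add' a b := by
    show (a + b) 0 + (a + b) 1 = a 0 + a 1 + (b 0 + b 1)
    change a 0 + b 0 + (a 1 + b 1) = _
    ring
  map_smul' c a := by
    show (c • a) 0 + (c • a) 1 = (RingHom.id ℝ) c • (a 0 + a 1)
    change c * a 0 + c * a 1 = _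
    simp; ring

lemma inter_null : volume (Sset ∩ Sset') = 0 := by
  have hsub : Sset ∩ Sset' ⊆ bE 0 +ᵥ (LinearMap.ker fsum : Set E) := by
    rintro x ⟨⟨_, _, h1⟩, _, _, h2⟩
    rw [Set.mem_vadd_set_iff_neg_vadd_mem]
    have : fsum (-bE 0 +ᵥ x) = fsum x - fsum (bE 0) := by
      simp only [vadd_eq_add]; rw [map_add, map_neg]; ring
    have hb : fsum (bE 0) = 1 := by
      simp [fsum, bE, EuclideanSpace.basisFun_apply, EuclideanSpace.single_apply]
    have hx : fsum x = 1 := le_antisymm h1 h2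
    simp only [SetLike.mem_coe, LinearMap.mem_ker, this, hb, hx, sub_self]
  refine measure_mono_null hsub ?_
  rw [measure_vadd]
  apply Measure.addHaar_submodule
  intro htop
  have : bE 0 ∈ LinearMap.ker fsum := htop ▸ Submodule.mem_top
  rw [LinearMap.mem_ker] at this
  simp [fsum, bE, EuclideanSpace.basisFun_apply, EuclideanSpace.single_apply] at this

lemma volume_Sset : volume Sset = 2⁻¹ := by
  have hS' : volume Sset' = volume Sset := by
    rw [Sset'_eq, measure_vadd, volume.measure_neg]
  have hpar : volume (parallelepiped (⇑bE)) = 1 := bE.volume_parallelepiped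
  have hmeas : MeasurableSet Sset := isClosed_Sset.measurableSet
  have h2 : volume (Sset ∪ Sset') + volume (Sset ∩ Sset') = volume Sset + volume Sset' :=
    measure_union_add_inter _ isClosed_Sset'.measurableSet
  rw [inter_null, add_zero, ← par_eq_union, hpar, hS'] at h2
  have : (2 : ℝ≥0∞) * volume Sset = 2 * 2⁻¹ := by
    rw [two_mul, ← h2, ENNReal.mul_inv_cancel two_ne_zero ENNReal.ofNat_ne_top]
  exact (ENNReal.mul_right_inj two_ne_zero ENNReal.ofNat_ne_top).mp this

instance factE : Fact (Module.finrank ℝ E = 2) := ⟨finrank_euclideanSpace_fin⟩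

def orE : Orientation ℝ E (Fin 2) := bE.toBasis.orientation

instance instOriented : Module.Oriented ℝ E (Fin 2) := ⟨orE⟩

lemma volume_triangle (u v : E) :
    volume (convexHull ℝ {0, u, v}) = ENNReal.ofReal |orE.areaForm u v| * 2⁻¹ := by
  classical
  set g : E →ₗ[ℝ] E := bE.toBasis.constr ℝ ![u, v] with hg
  have hgb0 : g (bE 0) = u := by
    have := bE.toBasis.constr_basis ℝ ![u, v] 0
    simpa [hg] using this
  have hgb1 : g (bE 1) = v := by
    have := bE.toBasis.constr_basis ℝ ![u, v] 1
    simpa [hg] using this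
  have himg : g '' (convexHull ℝ {0, bE 0, bE 1}) = convexHull ℝ {0, u, v} := by
    rw [g.image_convexHull]
    congr 1
    rw [Set.image_insert_eq, Set.image_insert_eq, Set.image_singleton, map_zero, hgb0, hgb1]
  have hpar : g '' (parallelepiped (⇑bE)) = parallelepiped ![u, v] := by
    rw [image_parallelepiped]
    have : ⇑g ∘ ⇑bE = ![u, v] := by
      funext i
      fin_cases i <;> simp [hgb0, hgb1]
    rw [this]
  have hdet1 : volume (parallelepiped ![u, v]) = ENNReal.ofReal |LinearMap.det g| * 1 := by
    rw [← hpar, Measure.addHaar_image_linearMap, bE.volume_parallelepiped]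
  have hdet2 : volume (parallelepiped ![u, v]) = ENNReal.ofReal |orE.volumeForm ![u, v]| := by
    rw [← orE.measure_eq_volume, AlternatingMap.measure_parallelepiped]
  have harea : orE.areaForm u v = orE.volumeForm ![u, v] := orE.areaForm_to_volumeForm u v
  rw [← himg, Measure.addHaar_image_linearMap, convexHull_eq_Sset, volume_Sset,
    harea, ← hdet2, hdet1, mul_one]

lemma abs_areaForm_eq (u v : E) (hu : u ≠ 0) (hv : v ≠ 0) :
    |orE.areaForm u v| = ‖u‖ * ‖v‖ * |Real.Angle.sin (orE.oangle u v)| := by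
  have him : (orE.kahler u v).im = orE.areaForm u v := by
    rw [orE.kahler_apply_apply]; simp
  have habs : ‖orE.kahler u v‖ = ‖u‖ * ‖v‖ := orE.norm_kahler u v
  have hsin : Real.Angle.sin (orE.oangle u v) =
      orE.areaForm u v / (‖u‖ * ‖v‖) := by
    rw [Orientation.oangle, Real.Angle.sin_coe, Complex.sin_arg, him, habs]
  rw [hsin, abs_div, abs_of_nonneg (by positivity : (0:ℝ) ≤ ‖u‖ * ‖v‖)]
  have hne : ‖u‖ * ‖v‖ ≠ 0 :=
    (mul_pos (norm_pos_iff.mpr hu) (norm_pos_iff.mpr hv)).ne'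
  field_simp

lemma area_ge (t : Affine.Simplex ℝ E 2) {r q : ℝ} (hr : 0 < r) (hq : 0 < q)
    (hd : ∀ i j : Fin 3, i ≠ j → 2 * r ≤ dist (t.points i) (t.points j))
    (hR : t.circumradius ≤ q) :
    ENNReal.ofReal (2 * r ^ 3 / q) ≤ volume (convexHull ℝ (Set.range t.points)) := by
  set p := t.points with hp
  set u := p 1 - p 0 with hu
  set v := p 2 - p 0 with hv
  -- range decomposition
  have hrange : Set.range p = p 0 +ᵥ ({0, u, v} : Set E) := by
    ext x
    constructor
    · rintro ⟨i, rfl⟩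
      fin_cases i
      · exact ⟨0, by simp, by simp⟩
      · exact ⟨u, by simp, by simp [hu]⟩
      · exact ⟨v, by simp [hv], by simp [hv]⟩
    · rintro ⟨y, (rfl | rfl | rfl), rfl⟩
      · exact ⟨0, by simp⟩
      · exact ⟨1, by simp [hu]⟩
      · exact ⟨2, by simp [hv]⟩
  have hvolT : volume (convexHull ℝ (Set.range p)) =
      ENNReal.ofReal |orE.areaForm u v| * 2⁻¹ := by
    rw [hrange, convexHull_vadd, measure_vadd, volume_triangle]
  -- circumradius positive
  have hRpos : 0 < t.circumradius := by
    have h01 : 2 * r ≤ dist (p 0) (p 1) := hd 0 1 (by decide)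
    have htri : dist (p 0) (p 1) ≤ 2 * t.circumradius := by
      calc dist (p 0) (p 1) ≤ dist (p 0) t.circumcenter + dist t.circumcenter (p 1) :=
            dist_triangle _ _ _
        _ = 2 * t.circumradius := by
            rw [t.dist_circumcenter_eq_circumradius 0, dist_comm,
              t.dist_circumcenter_eq_circumradius 1]; ring
    nlinarith
  -- law of sines
  have hlaw : dist (p 1) (p 2) / |Real.Angle.sin (∡ (p 1) (p 0) (p 2))| =
      2 * t.circumradius :=
    Affine.Triangle.dist_div_sin_oangle_eq_two_mul_circumradius t
      (by decide) (by decide) (by decide)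
  have hangle : ∡ (p 1) (p 0) (p 2) = orE.oangle u v := rfl
  rw [hangle] at hlaw
  set s := |Real.Angle.sin (orE.oangle u v)| with hs
  have hsne : s ≠ 0 := by
    intro h0
    rw [h0, _root_.div_zero] at hlaw
    nlinarith
  have hseq : s = dist (p 1) (p 2) / (2 * t.circumradius) := by
    field_simp at hlaw ⊢
    linarith [hlaw]
  -- nonzero vectors
  have hinj := t.independent.injective
  have hu0 : u ≠ 0 := sub_ne_zero.mpr (fun h => by
    have : (1 : Fin 3) = 0 := hinj h
    simp at this)
  have hv0 : v ≠ 0 := sub_ne_zero.mpr (fun h => by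
    have : (2 : Fin 3) = 0 := hinj h
    simp at this)
  -- lower bound on the area
  have hnu : ‖u‖ = dist (p 1) (p 0) := by rw [dist_eq_norm]
  have hnv : ‖v‖ = dist (p 2) (p 0) := by rw [dist_eq_norm]
  have hslb : r / q ≤ s := by
    rw [hseq]
    have h12 : 2 * r ≤ dist (p 1) (p 2) := hd 1 2 (by decide)
    have : 2 * r / (2 * q) ≤ dist (p 1) (p 2) / (2 * t.circumradius) := by
      apply div_le_div₀ (by positivity) h12 (by positivity)
      linarith
    calc r / q = 2 * r / (2 * q) := by ring
      _ ≤ _ := this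
  have harea : 2 * r ^ 3 / q ≤ |orE.areaForm u v| / 2 := by
    rw [abs_areaForm_eq u v hu0 hv0, hnu, hnv]
    have h1 : 2 * r ≤ dist (p 1) (p 0) := hd 1 0 (by decide)
    have h2 : 2 * r ≤ dist (p 2) (p 0) := hd 2 0 (by decide)
    have : (2 * r) * (2 * r) * (r / q) / 2 ≤
        dist (p 1) (p 0) * dist (p 2) (p 0) * s / 2 := by
      gcongr <;> first
        | exact div_nonneg hr.le hq.le
        | linarith
    calc 2 * r ^ 3 / q = (2 * r) * (2 * r) * (r / q) / 2 := by ring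
      _ ≤ _ := this
  rw [hvolT]
  calc ENNReal.ofReal (2 * r ^ 3 / q) ≤ ENNReal.ofReal (|orE.areaForm u v| / 2) :=
        ENNReal.ofReal_le_ofReal harea
    _ = ENNReal.ofReal |orE.areaForm u v| * 2⁻¹ := by
        rw [ENNReal.ofReal_div_of_pos two_pos, ENNReal.ofReal_ofNat]
        rw [div_eq_mul_inv]

lemma volume_disk (α : ℝ) (hα : 0 < α) :
    volume (Metric.closedBall (0 : E) α) = ENNReal.ofReal (Real.pi * α ^ 2) := by
  rw [EuclideanSpace.volume_closedBall]
  have h2 : (Fintype.card (Fin 2) : ℝ) / 2 + 1 = 2 := by norm_num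
  rw [h2]
  have : Real.sqrt Real.pi ^ Fintype.card (Fin 2) / Real.Gamma 2 = Real.pi := by
    rw [Real.Gamma_two]
    simp [Real.sq_sqrt Real.pi_pos.le]
  rw [this, ← ENNReal.ofReal_pow hα.le, ← ENNReal.ofReal_mul (by positivity)]
  rw [mul_comm]
  norm_num

lemma interior_vol (T : Set E) (p : Fin 3 → E) (hT : T = convexHull ℝ (Set.range p)) :
    volume T ≤ volume (interior T) := by
  have hconv : Convex ℝ T := hT ▸ convex_convexHull ℝ _
  have hfr : volume (frontier T) = 0 := hconv.addHaar_frontier volume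
  calc volume T ≤ volume (interior T ∪ frontier T) := by
        apply measure_mono
        intro x hx
        rw [← closure_eq_interior_union_frontier]
        exact subset_closure hx
    _ ≤ volume (interior T) + volume (frontier T) := measure_union_le _ _
    _ = volume (interior T) := by rw [hfr, add_zero]

end Stmt8Aux
end

open Stmt8Aux in
/-- Let `X ⊆ ℝ²` have pairwise distances at least `2 * r` (`r > 0`) and
let `q > 0`. A family of triangles with vertices in `X`, each with circumradius at most
`q`, with pairwise disjoint interiors, each contained in the closed disk `B_α` (`α > 0`),
has cardinality at most `q * π * α ^ 2 / (2 * r ^ 3)`. -/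
theorem card_uniformlyBounded_triangles_in_disk_le
    (X : Set (EuclideanSpace ℝ (Fin 2))) (r q α : ℝ) (hr : 0 < r) (hq : 0 < q) (hα : 0 < α)
    (hsep : ∀ p ∈ X, ∀ p' ∈ X, p ≠ p' → 2 * r ≤ dist p p')
    (𝒯 : Set (Set (EuclideanSpace ℝ (Fin 2))))
    (htri : ∀ T ∈ 𝒯, ∃ p : Fin 3 → EuclideanSpace ℝ (Fin 2),
      ∃ hp : AffineIndependent ℝ p, (∀ i, p i ∈ X) ∧ T = convexHull ℝ (Set.range p) ∧
        Affine.Simplex.circumradius (⟨p, hp⟩ : Affine.Simplex ℝ (EuclideanSpace ℝ (Fin 2)) 2) ≤ q)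
    (hdisj : 𝒯.Pairwise fun S T => Disjoint (interior S) (interior T))
    (hsub : ∀ T ∈ 𝒯, T ⊆ Metric.closedBall 0 α) :
    𝒯.Finite ∧ (Nat.card 𝒯 : ℝ) ≤ q * Real.pi * α ^ 2 / (2 * r ^ 3) := by
  classical
  set v0 : ℝ≥0∞ := ENNReal.ofReal (2 * r ^ 3 / q) with hv0
  have hv0pos : 0 < v0 := ENNReal.ofReal_pos.mpr (by positivity)
  -- each triangle's interior has volume at least v0
  have hTvol : ∀ T ∈ 𝒯, v0 ≤ volume (interior T) := by
    intro T hT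
    obtain ⟨p, hp, hpX, hTeq, hcir⟩ := htri T hT
    set t : Affine.Simplex ℝ E 2 := ⟨p, hp⟩ with ht
    have hd : ∀ i j : Fin 3, i ≠ j → 2 * r ≤ dist (t.points i) (t.points j) := by
      intro i j hij
      exact hsep _ (hpX i) _ (hpX j) (fun h => hij (hp.injective h))
    have h1 : v0 ≤ volume T := by
      rw [hTeq]
      exact area_ge t hr hq hd hcir
    exact h1.trans (interior_vol T p hTeq)
  -- key counting bound for finite subfamilies
  have key : ∀ F : Finset (Set E), ↑F ⊆ 𝒯 →
      (F.card : ℝ≥0∞) * v0 ≤ ENNReal.ofReal (Real.pi * α ^ 2) := by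
    intro F hF
    have hdisjF : (↑F : Set (Set E)).PairwiseDisjoint (fun T : Set E => interior T) := by
      intro a ha b hb hab
      exact hdisj (hF ha) (hF hb) hab
    have hmeas : ∀ T ∈ F, MeasurableSet (interior T) :=
      fun T _ => isOpen_interior.measurableSet
    calc (F.card : ℝ≥0∞) * v0 = ∑ _T ∈ F, v0 := by
          rw [Finset.sum_const, nsmul_eq_mul]
      _ ≤ ∑ T ∈ F, volume (interior T) :=
          Finset.sum_le_sum fun T hT => hTvol T (hF hT)
      _ = volume (⋃ T ∈ F, interior T) :=
          (measure_biUnion_finset hdisjF hmeas).symm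
      _ ≤ volume (Metric.closedBall (0 : E) α) := by
          apply measure_mono
          intro x hx
          simp only [Set.mem_iUnion] at hx
          obtain ⟨T, hT, hxT⟩ := hx
          exact hsub T (hF hT) (interior_subset hxT)
      _ = ENNReal.ofReal (Real.pi * α ^ 2) := volume_disk α hα
  -- finiteness
  have hfin : 𝒯.Finite := by
    by_contra hinf
    have hinf' : 𝒯.Infinite := hinf
    obtain ⟨n, hn⟩ := ENNReal.exists_nat_gt
      (lt_top_iff_ne_top.mp (ENNReal.div_lt_top ENNReal.ofReal_ne_top hv0pos.ne'))
    obtain ⟨F, hF, hcard⟩ := hinf'.exists_subset_card_eq (n + 1)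
    have h1 := key F hF
    rw [hcard] at h1
    have h2 : ENNReal.ofReal (Real.pi * α ^ 2) / v0 < (n + 1 : ℕ) := by
      exact_mod_cast hn.trans_le (by exact_mod_cast Nat.le_succ n)
    have h3 : ((n + 1 : ℕ) : ℝ≥0∞) * v0 ≤ ENNReal.ofReal (Real.pi * α ^ 2) := h1
    have h4 : ENNReal.ofReal (Real.pi * α ^ 2) / v0 < ((n + 1 : ℕ) : ℝ≥0∞) := h2
    rw [ENNReal.div_lt_iff (Or.inl hv0pos.ne') (Or.inl ENNReal.ofReal_ne_top)] at h4
    exact absurd h3 (not_le.mpr h4)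
  refine ⟨hfin, ?_⟩
  -- cardinality bound
  have hcards : (hfin.toFinset.card : ℝ≥0∞) * v0 ≤ ENNReal.ofReal (Real.pi * α ^ 2) :=
    key hfin.toFinset (by simp)
  have hNc : Nat.card 𝒯 = hfin.toFinset.card := by
    rw [Nat.card_eq_card_finite_toFinset hfin]
  set N := hfin.toFinset.card with hN
  have hreal : (N : ℝ) * (2 * r ^ 3 / q) ≤ Real.pi * α ^ 2 := by
    rw [← ENNReal.ofReal_le_ofReal_iff (by positivity)]
    rw [ENNReal.ofReal_mul (by positivity)]
    rw [ENNReal.ofReal_natCast]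
    exact hcards
  rw [hNc]
  rw [le_div_iff₀ (by positivity : (0:ℝ) < 2 * r ^ 3)]
  have hreal' : (N : ℝ) * (2 * r ^ 3) / q ≤ Real.pi * α ^ 2 := by
    rw [mul_div_assoc]; exact hreal
  have h5 := (div_le_iff₀ hq).mp hreal'
  nlinarith [h5]
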